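/- The polynomial X⁶ − 242X⁵ − 6671X⁴ − 70596X³ − 369297X² − 961038X − 998001 is irreducible over the imaginary quadratic field ℚ(√−259), the subfield of ℂ generated over ℚ by i√259. -/

import Mathlib

set_option maxHeartbeats 1000000

namespace SexticAux

open Polynomial Finset
local instance : Fact (Nat.Prime 5) := ⟨by norm_num⟩
noncomputable def P (R : Type) [CommRing R] : R[X] :=
  X ^ 6 - 242 * X ^ 5 - 6671 * X ^ 4 - 70596 * X ^ 3 - 369297 * X ^ 2 - 961038 * X - 998001

lemma P_coeff : ∀ n, n ≤ 6 → (P (ZMod 5)).coeff n = [4,2,3,4,4,3,1].getD n 0 := by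
  intro n hn
  interval_cases n <;> simp [P, coeff_X_pow, coeff_X, coeff_one] <;> decide

lemma P_natDegree (R : Type) [CommRing R] [Nontrivial R] : (P R).natDegree = 6 := by
  unfold P; compute_degree!

lemma P_monic (R : Type) [CommRing R] [Nontrivial R] : (P R).Monic := by
  unfold P; monicity!

lemma no15 : ∀ a s0 s1 s2 s3 s4 : ZMod 5,
    ¬((4:ZMod 5) = a*s0 ∧ 2 = a*s1 + s0 ∧ 3 = a*s2 + s1 ∧ 4 = a*s3 + s2 ∧ 4 = a*s4 + s3
      ∧ 3 = a + s4) := by decide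

lemma no24 : ∀ a b s0 s1 s2 s3 : ZMod 5,
    ¬((4:ZMod 5) = a*s0 ∧ 2 = a*s1 + b*s0 ∧ 3 = a*s2 + b*s1 + s0 ∧ 4 = a*s3 + b*s2 + s1
      ∧ 4 = a + b*s3 + s2 ∧ 3 = b + s3) := by decide

lemma no33 : ∀ a b c s0 s1 s2 : ZMod 5,
    ¬((4:ZMod 5) = a*s0 ∧ 2 = a*s1 + b*s0 ∧ 3 = a*s2 + b*s1 + c*s0 ∧ 4 = a + b*s2 + c*s1 + s0
      ∧ 4 = b + c*s2 + s1 ∧ 3 = c + s2) := by decide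

lemma key (p s : (ZMod 5)[X]) (hp : p.Monic) (hs : s.Monic)
    (hps : P (ZMod 5) = p * s) (h1 : 1 ≤ p.natDegree) (h3 : p.natDegree ≤ 3)
    (hsum : p.natDegree + s.natDegree = 6) : False := by
  have E : ∀ n, n ≤ 6 → ([4,2,3,4,4,3,1].getD n 0 : ZMod 5)
      = ∑ i ∈ range (n+1), p.coeff i * s.coeff (n - i) := by
    intro n hn
    rw [← P_coeff n hn, hps, coeff_mul, Finset.Nat.sum_antidiagonal_eq_sum_range_succ_mk]
  have e0 := E 0 (by norm_num)
  have e1 := E 1 (by norm_num)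
  have e2 := E 2 (by norm_num)
  have e3 := E 3 (by norm_num)
  have e4 := E 4 (by norm_num)
  have e5 := E 5 (by norm_num)
  interval_cases hd : p.natDegree
  · -- degree 1
    have hsd : s.natDegree = 5 := by omega
    have hp1 : p.coeff 1 = 1 := by have := hp.coeff_natDegree; rwa [hd] at this
    have hs5 : s.coeff 5 = 1 := by have := hs.coeff_natDegree; rwa [hsd] at this
    have hpz : ∀ k, 2 ≤ k → p.coeff k = 0 := fun k hk =>
      coeff_eq_zero_of_natDegree_lt (by omega)
    have hsz : ∀ k, 6 ≤ k → s.coeff k = 0 := fun k hk =>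
      coeff_eq_zero_of_natDegree_lt (by omega)
    simp [Finset.sum_range_succ, hp1, hs5, hpz, hsz] at e0 e1 e2 e3 e4 e5
    exact no15 _ _ _ _ _ _ ⟨e0, e1, e2, e3, e4, e5⟩
  · -- degree 2
    have hsd : s.natDegree = 4 := by omega
    have hp2 : p.coeff 2 = 1 := by have := hp.coeff_natDegree; rwa [hd] at this
    have hs4 : s.coeff 4 = 1 := by have := hs.coeff_natDegree; rwa [hsd] at this
    have hpz : ∀ k, 3 ≤ k → p.coeff k = 0 := fun k hk =>
      coeff_eq_zero_of_natDegree_lt (by omega)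
    have hsz : ∀ k, 5 ≤ k → s.coeff k = 0 := fun k hk =>
      coeff_eq_zero_of_natDegree_lt (by omega)
    simp [Finset.sum_range_succ, hp2, hs4, hpz, hsz] at e0 e1 e2 e3 e4 e5
    exact no24 _ _ _ _ _ _ ⟨e0, e1, e2, e3, e4, e5⟩
  · -- degree 3
    have hsd : s.natDegree = 3 := by omega
    have hp3 : p.coeff 3 = 1 := by have := hp.coeff_natDegree; rwa [hd] at this
    have hs3 : s.coeff 3 = 1 := by have := hs.coeff_natDegree; rwa [hsd] at this
    have hpz : ∀ k, 4 ≤ k → p.coeff k = 0 := fun k hk =>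
      coeff_eq_zero_of_natDegree_lt (by omega)
    have hsz : ∀ k, 4 ≤ k → s.coeff k = 0 := fun k hk =>
      coeff_eq_zero_of_natDegree_lt (by omega)
    simp [Finset.sum_range_succ, hp3, hs3, hpz, hsz] at e0 e1 e2 e3 e4 e5
    exact no33 _ _ _ _ _ _ ⟨e0, e1, e2, e3, e4, e5⟩

lemma aux (a b : (ZMod 5)[X]) (hab : P (ZMod 5) = a * b)
    (ha : ¬IsUnit a) (hb : ¬IsUnit b) (hle : a.natDegree ≤ b.natDegree) : False := by
  have hg0 : (P (ZMod 5)) ≠ 0 := (P_monic _).ne_zero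
  have ha0 : a ≠ 0 := by rintro rfl; rw [zero_mul] at hab; exact hg0 hab
  have hb0 : b ≠ 0 := by rintro rfl; rw [mul_zero] at hab; exact hg0 hab
  have hdeg : a.natDegree + b.natDegree = 6 := by
    rw [← natDegree_mul ha0 hb0, ← hab, P_natDegree]
  have ha1 : 1 ≤ a.natDegree := by
    by_contra h
    push_neg at h
    rw [Nat.lt_one_iff] at h
    obtain ⟨c, rfl⟩ := natDegree_eq_zero.mp h
    refine ha (isUnit_C.mpr (isUnit_iff_ne_zero.mpr ?_))
    rintro rfl; simp at ha0
  set u := a.leadingCoeff with hu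
  have hu0 : u ≠ 0 := leadingCoeff_ne_zero.mpr ha0
  set p := a * C u⁻¹ with hp
  set s := C u * b with hsdef
  have hps : P (ZMod 5) = p * s := by
    rw [hab, hp, hsdef]
    rw [mul_assoc, ← mul_assoc (C u⁻¹), ← C_mul, inv_mul_cancel₀ hu0, C_1, one_mul]
  have hpm : p.Monic := monic_mul_leadingCoeff_inv ha0
  have hsm : s.Monic := hpm.of_mul_monic_left (hps ▸ P_monic _)
  have hpd : p.natDegree = a.natDegree := by
    rw [hp, natDegree_mul ha0 (by simp [hu0]), natDegree_C, add_zero]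
  have hsd : p.natDegree + s.natDegree = 6 := by
    rw [← natDegree_mul hpm.ne_zero hsm.ne_zero, ← hps, P_natDegree]
  exact key p s hpm hsm hps (by omega) (by omega) hsd

lemma P5_irred : Irreducible (P (ZMod 5)) := by
  constructor
  · intro hu
    have := natDegree_eq_zero_of_isUnit hu
    rw [P_natDegree] at this
    omega
  · intro a b hab
    by_contra hc
    push_neg at hc
    obtain ⟨ha, hb⟩ := hc
    rcases le_total a.natDegree b.natDegree with h | h
    · exact aux a b hab ha hb h
    · exact aux b a (by rw [hab, mul_comm]) hb ha h

lemma P_map {R S : Type} [CommRing R] [CommRing S] (f : R →+* S) : (P R).map f = P S := by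
  simp [P, Polynomial.map_sub, Polynomial.map_mul, Polynomial.map_pow, map_X, Polynomial.map_ofNat]

lemma PZ5_irred : Irreducible (P ℤ_[5]) :=
  Polynomial.Monic.irreducible_of_irreducible_map PadicInt.toZMod (P ℤ_[5]) (P_monic _)
    (by rw [P_map]; exact P5_irred)

lemma PQ5_irred : Irreducible (P ℚ_[5]) := by
  have := ((P_monic ℤ_[5]).irreducible_iff_irreducible_map_fraction_map (K := ℚ_[5])).mp PZ5_irred
  rwa [P_map] at this

lemma exists_sqrt : ∃ r : ℚ_[5], r ^ 2 = -259 := by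
  have h8 : ‖((8 : ℤ) : ℤ_[5])‖ = 1 := by
    rcases lt_or_eq_of_le (PadicInt.norm_le_one ((8 : ℤ) : ℤ_[5])) with h | h
    · rw [PadicInt.norm_int_lt_one_iff_dvd] at h; norm_num at h
    · exact h
  have hnorm : ‖(X ^ 2 + C (259 : ℤ_[5])).eval 4‖
      < ‖((X ^ 2 + C (259 : ℤ_[5])).derivative.eval 4)‖ ^ 2 := by
    have hd : (X ^ 2 + C (259 : ℤ_[5])).derivative = C 2 * X ^ 1 := by
      simp [derivative_X_pow]; rw [← C_1, ← C_add]; norm_num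
    rw [hd]
    have he : (X ^ 2 + C (259 : ℤ_[5])).eval 4 = ((275 : ℤ) : ℤ_[5]) := by
      simp; norm_num
    have he2 : (C (2:ℤ_[5]) * X ^ 1).eval 4 = ((8 : ℤ) : ℤ_[5]) := by
      simp; norm_num
    rw [he, he2, h8, one_pow]
    rw [PadicInt.norm_int_lt_one_iff_dvd]
    norm_num
  obtain ⟨z, hz, -⟩ := hensels_lemma hnorm
  refine ⟨(z : ℚ_[5]), ?_⟩
  simp at hz
  have : z ^ 2 = -259 := by linear_combination hz
  exact_mod_cast congrArg (fun t : ℤ_[5] => (t : ℚ_[5])) this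

noncomputable section
def α : ℂ := Complex.I * (Real.sqrt 259 : ℂ)

lemma α_sq : α ^ 2 = -259 := by
  have h : ((Real.sqrt 259 : ℝ) : ℂ) ^ 2 = (259 : ℂ) := by
    rw [← Complex.ofReal_pow, Real.sq_sqrt (by norm_num : (0:ℝ) ≤ 259)]
    norm_num
  rw [α, mul_pow, Complex.I_sq, h]
  ring

def q : ℚ[X] := X ^ 2 + C 259

lemma q_monic : q.Monic := by unfold q; monicity!

lemma q_aeval : Polynomial.aeval α q = 0 := by
  rw [q]
  simp [α_sq]

lemma q_irred : Irreducible q := by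
  have h : (X ^ 2 - C (-259 : ℚ)) = q := by rw [q, map_neg, sub_neg_eq_add]
  rw [← h]
  exact X_pow_sub_C_irreducible_of_prime Nat.prime_two
    (fun b hb => by nlinarith [sq_nonneg b, hb])

lemma α_int : IsIntegral ℚ α := ⟨q, q_monic, q_aeval⟩

lemma minpoly_α : minpoly ℚ α = q :=
  (minpoly.eq_of_irreducible_of_monic q_irred q_aeval q_monic).symm

def r : ℚ_[5] := exists_sqrt.choose

lemma r_sq : r ^ 2 = -259 := exists_sqrt.choose_spec

lemma hr : (minpoly ℚ α).eval₂ (algebraMap ℚ ℚ_[5]) r = 0 := by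
  rw [minpoly_α, q]
  simp [r_sq]

def φ : (IntermediateField.adjoin ℚ ({α} : Set ℂ)) →+* ℚ_[5] :=
  (AdjoinRoot.lift (algebraMap ℚ ℚ_[5]) r hr).comp
    ((IntermediateField.adjoinRootEquivAdjoin ℚ α_int).symm.toAlgHom.toRingHom)

end

lemma P_K_irred : Irreducible (P (IntermediateField.adjoin ℚ ({α} : Set ℂ))) :=
  Polynomial.Monic.irreducible_of_irreducible_map φ _ (P_monic _)
    (by rw [P_map]; exact PQ5_irred)

end SexticAux

/-- The sextic `X⁶ − 242X⁵ − 6671X⁴ − 70596X³ − 369297X² − 961038X − 998001` is irreducible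
over the imaginary quadratic field `ℚ(√−259)`. -/
theorem sextic_irreducible_over_Q_sqrt_neg259 :
    Irreducible (Polynomial.X ^ 6 - 242 * Polynomial.X ^ 5 - 6671 * Polynomial.X ^ 4
        - 70596 * Polynomial.X ^ 3 - 369297 * Polynomial.X ^ 2 - 961038 * Polynomial.X
        - 998001 :
      Polynomial (IntermediateField.adjoin ℚ
        ({Complex.I * (Real.sqrt 259 : ℂ)} : Set ℂ))) :=
  SexticAux.P_K_irred
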